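/- Let f(x,w) = f_x(x) + w with f_x : X₀ → ℝⁿ Lipschitz continuous on a compact robust positive invariant set X₀ containing the origin in its interior, and let V : X₀ → ℝ≥0 be Lipschitz continuous on X₀ and an ISS-Lyapunov function for the undisturbed system x⁺ = f_x(x) (i.e., α₁(‖x‖) ≤ V(x) ≤ α₂(‖x‖) and V(f_x(x)) − V(x) ≤ −α₃(‖x‖) for class-K∞ functions α₁,α₂,α₃). Then V is an ISS-Lyapunov function for the disturbed system: there exists γ ∈ K such that V(f_x(x) + w) − V(x) ≤ −α₃(‖x‖) + γ(‖w‖) for all x ∈ X₀ and w ∈ W. -/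
import Mathlib


/-- Class-K function: continuous, strictly increasing on `[0,∞)`, zero at zero. -/
def ClassK (γ : ℝ → ℝ) : Prop :=
  ContinuousOn γ (Set.Ici 0) ∧ StrictMonoOn γ (Set.Ici 0) ∧ γ 0 = 0

/-- Class-K∞ function: class K and unbounded. -/
def ClassKInf (γ : ℝ → ℝ) : Prop :=
  ClassK γ ∧ Filter.Tendsto γ Filter.atTop Filter.atTop

/-- A Lipschitz ISS-Lyapunov function for the undisturbed system
`x⁺ = f_x(x)` is an ISS-Lyapunov function for `x⁺ = f_x(x) + w`. -/
theorem lipschitz_iss_lyapunov {n : ℕ}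
    (X0 W : Set (EuclideanSpace ℝ (Fin n)))
    (hX0c : IsCompact X0) (hX00 : 0 ∈ interior X0)
    (hWc : IsCompact W) (hW0 : (0 : EuclideanSpace ℝ (Fin n)) ∈ W)
    (fx : EuclideanSpace ℝ (Fin n) → EuclideanSpace ℝ (Fin n))
    (LF : NNReal) (hfLip : LipschitzOnWith LF fx X0)
    -- robust positive invariance of X0 for x⁺ = f_x(x) + w:
    (hinv : ∀ x ∈ X0, ∀ w ∈ W, fx x + w ∈ X0)
    (V : EuclideanSpace ℝ (Fin n) → ℝ) (hVnonneg : ∀ x ∈ X0, 0 ≤ V x)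
    (LV : NNReal) (hVLip : LipschitzOnWith LV V X0)
    (α₁ α₂ α₃ : ℝ → ℝ)
    (hα₁ : ClassKInf α₁) (hα₂ : ClassKInf α₂) (hα₃ : ClassKInf α₃)
    (hsandwich : ∀ x ∈ X0, α₁ ‖x‖ ≤ V x ∧ V x ≤ α₂ ‖x‖)
    (hdecrease : ∀ x ∈ X0, V (fx x) - V x ≤ -α₃ ‖x‖) :
    ∃ γ : ℝ → ℝ, ClassK γ ∧
      ∀ x ∈ X0, ∀ w ∈ W, V (fx x + w) - V x ≤ -α₃ ‖x‖ + γ ‖w‖ := by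
  refine ⟨fun r => ((LV : ℝ) + 1) * r, ⟨?_, ?_, by ring⟩, ?_⟩
  · exact (continuous_const.mul continuous_id).continuousOn
  · intro a _ b _ hab
    have h : (0:ℝ) < (LV : ℝ) + 1 := by positivity
    exact (mul_lt_mul_iff_right₀ h).mpr hab
  · intro x hx w hw
    have hfx : fx x ∈ X0 := by simpa using hinv x hx 0 hW0
    have hfxw : fx x + w ∈ X0 := hinv x hx w hw
    have hLip : |V (fx x + w) - V (fx x)| ≤ (LV : ℝ) * ‖w‖ := by
      have := hVLip.dist_le_mul _ hfxw _ hfx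
      simpa [Real.dist_eq, dist_eq_norm] using this
    have h1 : V (fx x + w) - V (fx x) ≤ (LV : ℝ) * ‖w‖ := (abs_le.mp hLip).2
    have h2 := hdecrease x hx
    have hw0 : (0:ℝ) ≤ ‖w‖ := norm_nonneg w
    simp only
    nlinarith
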